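/- Let (R,m) be a Noetherian local ring, N a finitely generated R-module, and k ≥ -1 an integer. If x_1,...,x_r ∈ m is an N-sequence in dimension > k (i.e., for each i, x_i avoids every associated prime p of N/(x_1,...,x_{i-1})N with dim(R/p) > k), then for any positive integers n_1,...,n_r, the sequence x_1^{n_1},...,x_r^{n_r} is also an N-sequence in dimension > k. -/

import Mathlib

open CategoryTheory Opposite IsLocalRing

/-- Interpretation of an integer `k ≥ -1` in `WithBot ℕ∞`, for comparison with Krull dimensions. -/
noncomputable def zdim (k : ℤ) : WithBot (WithTop ℕ) :=
  if k < 0 then ⊥ else ((k.toNat : WithTop ℕ) : WithBot (WithTop ℕ))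

/-- The ideal generated by the first `j` entries of the sequence `x`. -/
def prefIdeal {R : Type} [CommRing R] {r : ℕ} (x : Fin r → R) (j : ℕ) : Ideal R :=
  Ideal.span (x '' {i | (i : ℕ) < j})

/-- `x` is an `N`-sequence in dimension `> k`: for each `i`, `x i` avoids every associated
prime `p` of `N/(x_0,…,x_{i-1})N` with `dim(R/p) > k`. -/
def IsSeqInDimGT (R : Type) [CommRing R] (N : Type) [AddCommGroup N] [Module R N]
    (k : ℤ) {r : ℕ} (x : Fin r → R) : Prop :=
  ∀ i : Fin r, ∀ p ∈ associatedPrimes R (N ⧸ (prefIdeal x (i : ℕ) • ⊤ : Submodule R N)),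
    zdim k < ringKrullDim (R ⧸ p) → x i ∉ p

/-- `depth_k(I,N)`: the common length of maximal `N`-sequences in dimension `> k`
contained in `I` (realized as the supremum of lengths of such sequences). -/
noncomputable def depthK (R : Type) [CommRing R] (k : ℤ) (I : Ideal R)
    (N : Type) [AddCommGroup N] [Module R N] : ℕ∞ :=
  sSup {n : ℕ∞ | ∃ (r : ℕ) (x : Fin r → R),
    (∀ i, x i ∈ I) ∧ IsSeqInDimGT R N k x ∧ n = (r : ℕ∞)}

/-- The set of prime (or arbitrary) ideals `p` with `dim(R/p) ≥ k`. -/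
def dimGE (R : Type) [CommRing R] (k : ℤ) : Set (Ideal R) :=
  {p | zdim k ≤ ringKrullDim (R ⧸ p)}

open scoped Pointwise

section SRegAux

variable {R : Type} [CommRing R]

/-- `x` acts "injectively up to `S`-torsion" on `M`. -/
def SReg (S : Submonoid R) (M : Type) [AddCommGroup M] [Module R M] (x : R) : Prop :=
  ∀ m : M, x • m = 0 → ∃ s ∈ S, s • m = 0

/-- A list is an `S`-weakly-regular sequence on `M`. -/
def SSeqL (S : Submonoid R) : (l : List R) → (M : Type) → [AddCommGroup M] → [Module R M] → Prop
  | [], _, _, _ => True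
  | a :: l, M, i, j =>
    letI := i; letI := j
    SReg S M a ∧ SSeqL S l (M ⧸ (Ideal.span {a} • ⊤ : Submodule R M))

lemma sseqL_nil (S : Submonoid R) (M : Type) [AddCommGroup M] [Module R M] :
    SSeqL S [] M := trivial

lemma sseqL_cons (S : Submonoid R) (a : R) (l : List R) (M : Type) [AddCommGroup M]
    [Module R M] :
    SSeqL S (a :: l) M ↔
      SReg S M a ∧ SSeqL S l (M ⧸ (Ideal.span {a} • ⊤ : Submodule R M)) := Iff.rfl

variable (S : Submonoid R)

lemma mem_span_singleton_smul_top {M : Type} [AddCommGroup M] [Module R M] {a : R} {m : M} :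
    m ∈ (Ideal.span {a} • ⊤ : Submodule R M) ↔ ∃ b, a • b = m := by
  constructor
  · intro h
    refine Submodule.smul_induction_on h (fun r hr n _ => ?_) ?_
    · obtain ⟨c, rfl⟩ := Ideal.mem_span_singleton'.mp hr
      exact ⟨c • n, by rw [smul_smul, mul_comm]⟩
    · rintro x y ⟨b₁, rfl⟩ ⟨b₂, rfl⟩
      exact ⟨b₁ + b₂, by rw [smul_add]⟩
  · rintro ⟨b, rfl⟩
    exact Submodule.smul_mem_smul (Ideal.mem_span_singleton_self a) Submodule.mem_top

lemma sreg_pow {M : Type} [AddCommGroup M] [Module R M] {x : R} (h : SReg S M x) (c : ℕ) :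
    SReg S M (x ^ c) := by
  induction c with
  | zero => exact fun m hm => ⟨1, S.one_mem, by simpa using hm⟩
  | succ c ih =>
    intro m hm
    rw [pow_succ, mul_smul] at hm
    obtain ⟨s, hs, hsm⟩ := ih (x • m) hm
    rw [smul_comm] at hsm
    obtain ⟨t, ht, htm⟩ := h (s • m) hsm
    exact ⟨t * s, S.mul_mem ht hs, by rwa [mul_smul]⟩

lemma sreg_congr {M M₂ : Type} [AddCommGroup M] [Module R M] [AddCommGroup M₂] [Module R M₂]
    (e : M ≃ₗ[R] M₂) {x : R} (h : SReg S M x) : SReg S M₂ x := by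
  intro m hm
  obtain ⟨s, hs, h2⟩ := h (e.symm m) (by rw [← map_smul, hm, map_zero])
  refine ⟨s, hs, ?_⟩
  have := congrArg e h2
  rwa [map_smul, map_zero, e.apply_symm_apply] at this

end SRegAux
section SRegAux2

variable {R : Type} [CommRing R] (S : Submonoid R)

lemma sseq_of_exact (l : List R) :
    ∀ {A B C : Type} [AddCommGroup A] [Module R A] [AddCommGroup B] [Module R B]
      [AddCommGroup C] [Module R C] (f : A →ₗ[R] B) (g : B →ₗ[R] C),
      (∀ a, f a = 0 → ∃ s ∈ S, s • a = 0) → Function.Surjective g →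
      (∀ a, g (f a) = 0) → (∀ b, g b = 0 → ∃ s ∈ S, ∃ a, s • b = f a) →
      SSeqL S l A → SSeqL S l C → SSeqL S l B := by
  induction l with
  | nil => intros; trivial
  | cons r l ih =>
    intro A B C _ _ _ _ _ _ f g hf hg h0 hex hA hC
    obtain ⟨hA1, hA2⟩ := hA
    obtain ⟨hC1, hC2⟩ := hC
    constructor
    · -- SReg S B r
      intro b hb
      have h1 : r • g b = 0 := by rw [← map_smul, hb, map_zero]
      obtain ⟨s₁, hs₁, h2⟩ := hC1 _ h1
      rw [← map_smul] at h2
      obtain ⟨s₂, hs₂, a, h3⟩ := hex _ h2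
      have h4 : f (r • a) = 0 := by
        rw [map_smul, ← h3, smul_comm r s₂, smul_comm r s₁, hb, smul_zero, smul_zero]
      obtain ⟨s₃, hs₃, h5⟩ := hf _ h4
      rw [smul_comm] at h5
      obtain ⟨s₄, hs₄, h6⟩ := hA1 _ h5
      refine ⟨s₄ * s₃ * s₂ * s₁, S.mul_mem (S.mul_mem (S.mul_mem hs₄ hs₃) hs₂) hs₁, ?_⟩
      rw [mul_smul, mul_smul, h3, ← map_smul, mul_smul, h6, map_zero]
    · -- quotient stage
      set WA : Submodule R A := Ideal.span {r} • ⊤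
      set WB : Submodule R B := Ideal.span {r} • ⊤
      set WC : Submodule R C := Ideal.span {r} • ⊤
      have hleAB : WA ≤ WB.comap f := Submodule.smul_top_le_comap_smul_top _ f
      have hleBC : WB ≤ WC.comap g := Submodule.smul_top_le_comap_smul_top _ g
      set fbar : (A ⧸ WA) →ₗ[R] (B ⧸ WB) := Submodule.mapQ _ _ f hleAB
      set gbar : (B ⧸ WB) →ₗ[R] (C ⧸ WC) := Submodule.mapQ _ _ g hleBC
      refine ih fbar gbar ?_ ?_ ?_ ?_ hA2 hC2
      · -- S-injectivity of fbar
        intro abar hab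
        obtain ⟨a, rfl⟩ := Submodule.Quotient.mk_surjective WA abar
        rw [Submodule.mapQ_apply, Submodule.Quotient.mk_eq_zero] at hab
        obtain ⟨b, hb⟩ := mem_span_singleton_smul_top.mp hab
        have h1 : r • g b = 0 := by
          rw [← map_smul, hb, h0]
        obtain ⟨s₁, hs₁, h2⟩ := hC1 _ h1
        rw [← map_smul] at h2
        obtain ⟨s₂, hs₂, a', h3⟩ := hex _ h2
        have h4 : f ((s₂ * s₁) • a - r • a') = 0 := by
          rw [map_sub, map_smul, map_smul, ← hb, ← h3, mul_smul, smul_comm r s₂,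
            smul_comm r s₁, sub_self]
        obtain ⟨s₃, hs₃, h5⟩ := hf _ h4
        refine ⟨s₃ * (s₂ * s₁), S.mul_mem hs₃ (S.mul_mem hs₂ hs₁), ?_⟩
        rw [← Submodule.Quotient.mk_smul, Submodule.Quotient.mk_eq_zero]
        rw [smul_sub, sub_eq_zero] at h5
        rw [mul_smul s₃, h5]
        exact mem_span_singleton_smul_top.mpr ⟨s₃ • a', by rw [smul_comm]⟩
      · -- surjectivity of gbar
        intro cbar
        obtain ⟨c, rfl⟩ := Submodule.Quotient.mk_surjective WC cbar
        obtain ⟨b, rfl⟩ := hg c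
        exact ⟨Submodule.Quotient.mk b, by rw [Submodule.mapQ_apply]⟩
      · -- composition zero
        intro abar
        obtain ⟨a, rfl⟩ := Submodule.Quotient.mk_surjective WA abar
        rw [Submodule.mapQ_apply, Submodule.mapQ_apply, h0, Submodule.Quotient.mk_eq_zero]
        exact Submodule.zero_mem _
      · -- exactness up to S-torsion
        intro bbar hbb
        obtain ⟨b, rfl⟩ := Submodule.Quotient.mk_surjective WB bbar
        rw [Submodule.mapQ_apply, Submodule.Quotient.mk_eq_zero] at hbb
        obtain ⟨c, hc⟩ := mem_span_singleton_smul_top.mp hbb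
        obtain ⟨b', rfl⟩ := hg c
        have h1 : g (b - r • b') = 0 := by
          rw [map_sub, map_smul, hc, sub_self]
        obtain ⟨s, hs, a, ha⟩ := hex _ h1
        refine ⟨s, hs, Submodule.Quotient.mk a, ?_⟩
        rw [Submodule.mapQ_apply, ← Submodule.Quotient.mk_smul, Submodule.Quotient.eq]
        have h2 : s • b - f a = r • (s • b') := by
          rw [← ha, smul_sub, sub_sub_cancel, smul_comm]
        rw [h2]
        exact mem_span_singleton_smul_top.mpr ⟨s • b', rfl⟩

lemma sseq_quot_pow {M : Type} [AddCommGroup M] [Module R M] {a : R} (ha : SReg S M a)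
    (l : List R) (hq : SSeqL S l (M ⧸ (Ideal.span {a} • ⊤ : Submodule R M))) :
    ∀ c : ℕ, 0 < c → SSeqL S l (M ⧸ (Ideal.span {a ^ c} • ⊤ : Submodule R M)) := by
  intro c
  induction c with
  | zero => exact fun h => absurd h (by simp)
  | succ c ih =>
    intro _
    rcases Nat.eq_zero_or_pos c with rfl | hc
    · rw [pow_one]; exact hq
    have hC := ih hc
    -- short exact sequence M/aM → M/a^{c+1}M → M/a^cM
    set WA : Submodule R M := Ideal.span {a} • ⊤
    set WB : Submodule R M := Ideal.span {a ^ (c+1)} • ⊤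
    set WC : Submodule R M := Ideal.span {a ^ c} • ⊤
    have hleAB : WA ≤ WB.comap (LinearMap.lsmul R M (a ^ c)) := by
      intro m hm
      obtain ⟨b, rfl⟩ := mem_span_singleton_smul_top.mp hm
      simp only [Submodule.mem_comap, LinearMap.lsmul_apply]
      exact mem_span_singleton_smul_top.mpr ⟨b, by rw [smul_smul, ← pow_succ]⟩
    have hleBC : WB ≤ WC := by
      apply Submodule.smul_mono_left
      rw [Ideal.span_singleton_le_span_singleton]
      exact pow_dvd_pow a (Nat.le_succ c)
    set f : (M ⧸ WA) →ₗ[R] (M ⧸ WB) := Submodule.mapQ _ _ (LinearMap.lsmul R M (a ^ c)) hleAB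
    set g : (M ⧸ WB) →ₗ[R] (M ⧸ WC) := Submodule.mapQ _ _ LinearMap.id (fun x hx => hleBC hx)
    refine sseq_of_exact S l f g ?_ ?_ ?_ ?_ hq hC
    · intro mbar hm
      obtain ⟨m, rfl⟩ := Submodule.Quotient.mk_surjective WA mbar
      rw [Submodule.mapQ_apply, Submodule.Quotient.mk_eq_zero, LinearMap.lsmul_apply] at hm
      obtain ⟨m', hm'⟩ := mem_span_singleton_smul_top.mp hm
      have h1 : (a ^ c) • (m - a • m') = 0 := by
        rw [smul_sub, smul_smul, ← pow_succ, hm', sub_self]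
      obtain ⟨s, hs, h2⟩ := sreg_pow S ha c _ h1
      refine ⟨s, hs, ?_⟩
      rw [← Submodule.Quotient.mk_smul, Submodule.Quotient.mk_eq_zero]
      rw [smul_sub, sub_eq_zero] at h2
      rw [h2]
      exact mem_span_singleton_smul_top.mpr ⟨s • m', by rw [smul_comm]⟩
    · intro mbar
      obtain ⟨m, rfl⟩ := Submodule.Quotient.mk_surjective WC mbar
      exact ⟨Submodule.Quotient.mk m, by rw [Submodule.mapQ_apply]; rfl⟩
    · intro mbar
      obtain ⟨m, rfl⟩ := Submodule.Quotient.mk_surjective WA mbar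
      rw [Submodule.mapQ_apply, Submodule.mapQ_apply, Submodule.Quotient.mk_eq_zero]
      exact mem_span_singleton_smul_top.mpr ⟨m, rfl⟩
    · intro mbar hm
      obtain ⟨m, rfl⟩ := Submodule.Quotient.mk_surjective WB mbar
      rw [Submodule.mapQ_apply, Submodule.Quotient.mk_eq_zero] at hm
      simp only [LinearMap.id_apply] at hm
      obtain ⟨m', hm'⟩ := mem_span_singleton_smul_top.mp hm
      refine ⟨1, S.one_mem, Submodule.Quotient.mk m', ?_⟩
      rw [Submodule.mapQ_apply, LinearMap.lsmul_apply, one_smul, hm']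

lemma sseq_pow (l : List R) :
    ∀ (ns : List ℕ) {M : Type} [AddCommGroup M] [Module R M],
      ns.length = l.length → (∀ c ∈ ns, 0 < c) → SSeqL S l M →
      SSeqL S (List.zipWith (· ^ ·) l ns) M := by
  induction l with
  | nil => intro ns M _ _ _ _ _; rw [List.zipWith_nil_left]; trivial
  | cons a l ih =>
    intro ns M _ _ hlen hpos h
    cases ns with
    | nil => simp at hlen
    | cons c ns =>
      obtain ⟨h1, h2⟩ := h
      rw [List.zipWith_cons_cons]
      refine ⟨sreg_pow S h1 c, ?_⟩
      have hq := sseq_quot_pow S h1 l h2 c (hpos c List.mem_cons_self)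
      exact ih ns (by simpa using hlen) (fun d hd => hpos d (List.mem_cons_of_mem _ hd)) hq

end SRegAux2
section PrefAux

variable {R : Type} [CommRing R] (S : Submonoid R)

lemma prefIdeal_zero {L : ℕ} (y : Fin L → R) : prefIdeal y 0 = ⊥ := by
  have h : y '' {i : Fin L | (i : ℕ) < 0} = ∅ := by simp
  rw [prefIdeal, h, Ideal.span_empty]

lemma prefIdeal_succ {L : ℕ} (y : Fin (L + 1) → R) (j : ℕ) :
    prefIdeal y (j + 1) = Ideal.span {y 0} ⊔ prefIdeal (Fin.tail y) j := by
  rw [prefIdeal, prefIdeal, ← Ideal.span_union]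
  congr 1
  ext z
  constructor
  · rintro ⟨t, ht, rfl⟩
    rcases Fin.eq_zero_or_eq_succ t with rfl | ⟨u, rfl⟩
    · exact Or.inl rfl
    · refine Or.inr ⟨u, ?_, rfl⟩
      have : (u : ℕ) + 1 < j + 1 := by simpa [Fin.val_succ] using ht
      exact Nat.lt_of_succ_lt_succ this
  · rintro (rfl | ⟨u, hu, rfl⟩)
    · exact ⟨0, by simp, rfl⟩
    · exact ⟨u.succ, by simpa [Fin.val_succ] using Nat.succ_lt_succ hu, rfl⟩

lemma prefIdeal_castLE {L r : ℕ} (h : L ≤ r) (x : Fin r → R) (j : ℕ) (hj : j ≤ L) :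
    prefIdeal (fun t => x (Fin.castLE h t)) j = prefIdeal x j := by
  rw [prefIdeal, prefIdeal]
  congr 1
  ext z
  constructor
  · rintro ⟨t, ht, rfl⟩
    exact ⟨Fin.castLE h t, ht, rfl⟩
  · rintro ⟨t, ht, rfl⟩
    exact ⟨⟨(t : ℕ), lt_of_lt_of_le ht hj⟩, ht, rfl⟩

lemma sseq_ofFn_iff :
    ∀ (L : ℕ) (y : Fin L → R) (N : Type) [AddCommGroup N] [Module R N],
      SSeqL S (List.ofFn y) N ↔
        ∀ j : Fin L, SReg S (N ⧸ (prefIdeal y (j : ℕ) • ⊤ : Submodule R N)) (y j) := by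
  intro L
  induction L with
  | zero =>
    intro y N _ _
    rw [List.ofFn_zero]
    exact ⟨fun _ j => j.elim0, fun _ => trivial⟩
  | succ L ih =>
    intro y N _ _
    rw [List.ofFn_succ, sseqL_cons, ih, Fin.forall_fin_succ]
    have e0 : (N ⧸ (prefIdeal y ((0 : Fin (L + 1)) : ℕ) • ⊤ : Submodule R N)) ≃ₗ[R] N :=
      Submodule.quotEquivOfEqBot _ (by rw [show ((0 : Fin (L+1)) : ℕ) = 0 from rfl,
        prefIdeal_zero, Submodule.bot_smul])
    have key : ∀ j : Fin L,
        ((N ⧸ (Ideal.span {y 0} • ⊤ : Submodule R N)) ⧸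
          (prefIdeal (Fin.tail y) (j : ℕ) • ⊤ :
            Submodule R (N ⧸ (Ideal.span {y 0} • ⊤ : Submodule R N)))) ≃ₗ[R]
        (N ⧸ (prefIdeal y ((j.succ : Fin (L + 1)) : ℕ) • ⊤ : Submodule R N)) := by
      intro j
      have h1 : (prefIdeal (Fin.tail y) (j : ℕ) • ⊤ :
          Submodule R (N ⧸ (Ideal.span {y 0} • ⊤ : Submodule R N))) =
          Submodule.map (Ideal.span {y 0} • ⊤ : Submodule R N).mkQ
            (prefIdeal (Fin.tail y) (j : ℕ) • ⊤) := by
        rw [Submodule.map_smul'', Submodule.map_top, Submodule.range_mkQ]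
      have h2 : (Ideal.span {y 0} • ⊤ : Submodule R N) ⊔ (prefIdeal (Fin.tail y) (j : ℕ) • ⊤) =
          (prefIdeal y ((j.succ : Fin (L + 1)) : ℕ) • ⊤ : Submodule R N) := by
        rw [Fin.val_succ, prefIdeal_succ, Submodule.sup_smul]
      exact (Submodule.quotEquivOfEq _ _ h1) ≪≫ₗ
        (Submodule.quotientQuotientEquivQuotientSup _ _) ≪≫ₗ (Submodule.quotEquivOfEq _ _ h2)
    constructor
    · rintro ⟨h1, h2⟩
      refine ⟨fun m hm => ?_, fun j => ?_⟩
      · obtain ⟨s, hs, hsm⟩ := h1 (e0 m) (by rw [← map_smul, hm, map_zero])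
        exact ⟨s, hs, by
          have := congrArg e0.symm hsm
          rwa [map_smul, map_zero, e0.symm_apply_apply] at this⟩
      · exact sreg_congr S (key j) (h2 j)
    · rintro ⟨h1, h2⟩
      refine ⟨fun m hm => ?_, fun j => ?_⟩
      · obtain ⟨s, hs, hsm⟩ := h1 (e0.symm m) (by rw [← map_smul, hm, map_zero])
        exact ⟨s, hs, by
          have := congrArg e0 hsm
          rwa [map_smul, map_zero, e0.apply_symm_apply] at this⟩
      · exact sreg_congr S (key j).symm (h2 j)

lemma zipWith_pow_ofFn {L : ℕ} (y : Fin L → R) (c : Fin L → ℕ) :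
    List.zipWith (· ^ ·) (List.ofFn y) (List.ofFn c) = List.ofFn (fun t => y t ^ c t) := by
  induction L with
  | zero => simp
  | succ L ih =>
    rw [List.ofFn_succ, List.ofFn_succ, List.ofFn_succ, List.zipWith_cons_cons]
    rw [ih]

lemma exists_assPrime_le [IsNoetherianRing R] {M : Type} [AddCommGroup M] [Module R M]
    {p : Ideal R} [hp : p.IsPrime] {x : R} {m : M} (hxm : x • m = 0)
    (hann : (R ∙ m).annihilator ≤ p) :
    ∃ q ∈ associatedPrimes R M, x ∈ q ∧ q ≤ p := by
  set 𝒮 : Set (Ideal R) := {J | ∃ m' : M, J = (R ∙ m').annihilator ∧ x • m' = 0 ∧ J ≤ p}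
    with h𝒮
  have hne : 𝒮.Nonempty := ⟨(R ∙ m).annihilator, m, rfl, hxm, hann⟩
  obtain ⟨q, hq𝒮, hmax⟩ :=
    (set_has_maximal_iff_noetherian.mpr (inferInstance : IsNoetherian R R)) 𝒮 hne
  obtain ⟨m₀, rfl, hxm₀, hqp⟩ := hq𝒮
  have hmax' : ∀ m' : M, x • m' = 0 → (R ∙ m').annihilator ≤ p →
      (R ∙ m₀).annihilator ≤ (R ∙ m').annihilator → (R ∙ m').annihilator = (R ∙ m₀).annihilator := by
    intro m' h1 h2 hle
    by_contra hne'
    exact hmax _ ⟨m', rfl, h1, h2⟩ (lt_of_le_of_ne hle (Ne.symm hne'))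
  have hprime : ((R ∙ m₀).annihilator).IsPrime := by
    constructor
    · intro htop
      exact hp.ne_top (top_le_iff.mp (htop ▸ hqp))
    · intro a b hab
      by_cases hb : b ∈ (R ∙ m₀).annihilator
      · exact Or.inr hb
      · left
        rw [Submodule.mem_annihilator_span_singleton] at hab hb ⊢
        have hmono : ∀ (c : R) (m' : M), (R ∙ m₀).annihilator ≤ (R ∙ (c • m₀)).annihilator := by
          intro c m'
          intro rr hrr
          rw [Submodule.mem_annihilator_span_singleton] at hrr ⊢
          rw [smul_comm, hrr, smul_zero]
        -- m₁ = b • m₀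
        have hxm₁ : x • (b • m₀) = 0 := by rw [smul_comm, hxm₀, smul_zero]
        by_cases h₁ : (R ∙ (b • m₀)).annihilator ≤ p
        · have heq := hmax' (b • m₀) hxm₁ h₁ (hmono b m₀)
          have : a ∈ (R ∙ (b • m₀)).annihilator := by
            rw [Submodule.mem_annihilator_span_singleton, smul_smul, hab]
          rw [heq, Submodule.mem_annihilator_span_singleton] at this
          exact this
        · obtain ⟨s, hs, hsp⟩ := SetLike.not_le_iff_exists.mp h₁
          rw [Submodule.mem_annihilator_span_singleton] at hs
          have hxm₂ : x • (s • m₀) = 0 := by rw [smul_comm, hxm₀, smul_zero]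
          by_cases h₂ : (R ∙ (s • m₀)).annihilator ≤ p
          · have heq := hmax' (s • m₀) hxm₂ h₂ (hmono s m₀)
            have : b ∈ (R ∙ (s • m₀)).annihilator := by
              rw [Submodule.mem_annihilator_span_singleton, smul_comm, hs]
            rw [heq, Submodule.mem_annihilator_span_singleton] at this
            exact absurd this hb
          · obtain ⟨t, ht, htp⟩ := SetLike.not_le_iff_exists.mp h₂
            rw [Submodule.mem_annihilator_span_singleton] at ht
            have : t * s ∈ (R ∙ m₀).annihilator := by
              rw [Submodule.mem_annihilator_span_singleton, mul_smul]
              exact ht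
            have := hqp this
            rcases hp.mem_or_mem this with h | h
            · exact absurd h htp
            · exact absurd h hsp
  refine ⟨(R ∙ m₀).annihilator, isAssociatedPrime_iff.mpr ⟨hprime, m₀, by
    ext; simp [Submodule.mem_colon_singleton, Submodule.mem_annihilator_span_singleton]⟩, ?_, hqp⟩
  rwa [Submodule.mem_annihilator_span_singleton]

lemma ringKrullDim_quotient_antitone {q p : Ideal R} (h : q ≤ p) :
    ringKrullDim (R ⧸ p) ≤ ringKrullDim (R ⧸ q) := by
  refine ringKrullDim_le_of_surjective (Ideal.Quotient.factor h) ?_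
  intro z
  obtain ⟨rr, rfl⟩ := Ideal.Quotient.mk_surjective z
  exact ⟨Ideal.Quotient.mk q rr, Ideal.Quotient.factor_mk h rr⟩

end PrefAux
/-- If `x₁,…,x_r ∈ m` is an `N`-sequence in dimension `> k`, then so is
`x₁^{n₁},…,x_r^{n_r}` for any positive integers `n₁,…,n_r`. -/
theorem powers_of_seq_in_dim_gt (R : Type) [CommRing R] [IsNoetherianRing R] [IsLocalRing R]
    (N : Type) [AddCommGroup N] [Module R N] [Module.Finite R N]
    (k : ℤ) (hk : -1 ≤ k) (r : ℕ) (x : Fin r → R)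
    (hxm : ∀ i, x i ∈ maximalIdeal R)
    (hx : IsSeqInDimGT R N k x)
    (n : Fin r → ℕ) (hn : ∀ i, 0 < n i) :
    IsSeqInDimGT R N k (fun i => x i ^ n i) := by
  intro i p hp hdim hmem
  obtain ⟨hprime, m, hpdef⟩ := isAssociatedPrime_iff.mp hp
  haveI := hprime
  have hLr : (i : ℕ) + 1 ≤ r := i.isLt
  -- Each `x j`, `j ≤ i`, is regular "up to `p.primeCompl`-torsion" on `N/(x_0,…,x_{j-1})N`.
  have hsr : ∀ j : Fin ((i : ℕ) + 1), SReg p.primeCompl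
      (N ⧸ (prefIdeal (fun t => x (Fin.castLE hLr t)) (j : ℕ) • ⊤ : Submodule R N))
      ((fun t => x (Fin.castLE hLr t)) j) := by
    intro j m' hm'
    by_contra hno
    push_neg at hno
    have hann : (R ∙ m').annihilator ≤ p := by
      intro rr hrr
      by_contra hrp
      exact hno rr hrp (by rwa [Submodule.mem_annihilator_span_singleton] at hrr)
    obtain ⟨q, hq, hxq, hqp⟩ := exists_assPrime_le hm' hann
    have hd2 : zdim k < ringKrullDim (R ⧸ q) :=
      lt_of_lt_of_le hdim (ringKrullDim_quotient_antitone hqp)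
    have hq' : q ∈ associatedPrimes R
        (N ⧸ (prefIdeal x ((Fin.castLE hLr j : Fin r) : ℕ) • ⊤ : Submodule R N)) := by
      rwa [show ((Fin.castLE hLr j : Fin r) : ℕ) = (j : ℕ) from rfl,
        ← prefIdeal_castLE hLr x (j : ℕ) (le_of_lt j.isLt)]
    exact (hx (Fin.castLE hLr j) q hq' hd2) hxq
  have hseq : SSeqL p.primeCompl (List.ofFn (fun t => x (Fin.castLE hLr t))) N :=
    (sseq_ofFn_iff p.primeCompl ((i : ℕ) + 1) _ N).mpr hsr
  have hseq2 := sseq_pow p.primeCompl (List.ofFn (fun t => x (Fin.castLE hLr t)))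
      (List.ofFn (fun t => n (Fin.castLE hLr t))) (by simp)
      (fun c hc => by
        obtain ⟨t, ht⟩ := List.mem_ofFn.mp hc
        exact ht ▸ hn (Fin.castLE hLr t)) hseq
  rw [zipWith_pow_ofFn] at hseq2
  have hfin := (sseq_ofFn_iff p.primeCompl ((i : ℕ) + 1) _ N).mp hseq2
    ⟨(i : ℕ), Nat.lt_succ_self _⟩
  have hcast : Fin.castLE hLr ⟨(i : ℕ), Nat.lt_succ_self _⟩ = i := Fin.ext rfl
  have hid : prefIdeal
      (fun t => x (Fin.castLE hLr t) ^ n (Fin.castLE hLr t)) ((i : ℕ)) =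
      prefIdeal (fun t => x t ^ n t) ((i : ℕ)) :=
    prefIdeal_castLE hLr (fun t => x t ^ n t) (i : ℕ) (Nat.le_succ _)
  rw [hcast] at hfin
  rw [hid] at hfin
  have hm0 : (x i ^ n i) • m = 0 := by
    have h1 : x i ^ n i ∈ (R ∙ m).annihilator := by
      rw [Submodule.mem_annihilator_span_singleton]
      rw [hpdef, Submodule.mem_colon_singleton, Submodule.mem_bot] at hmem
      exact hmem
    rwa [Submodule.mem_annihilator_span_singleton] at h1
  obtain ⟨s, hs, hsm⟩ := hfin m hm0
  have hsp : s ∈ p := by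
    rw [hpdef]
    rw [Submodule.mem_colon_singleton, Submodule.mem_bot]
    exact hsm
  exact hs hsp
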